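/- Let X = T(θ_n,S_n)_{n∈ℕ} be a regular mixed Tsirelson space with norm ‖·‖ and θ_0 = 1. Let k ∈ ℕ and x_1 < x_2 < ⋯ < x_k be nonzero vectors in c₀₀ with k ≤ min ran(x_1) and ‖x_i‖ ≤ 1 for all i; set x = (1/k)(x_1 + ⋯ + x_k), N_i = max ran(x_i) for 1 ≤ i ≤ k and N_0 = 1. Let ε ∈ (0,1), N ∈ ℕ, and let F ⊆ ran(x) be an interval which does not split any x_i. If k > 6N/(θ_1·ε), then for every p ≥ 1: ‖Fx‖_{N,p} ≤ (θ_p/θ_{p−1})·max{ ‖x_i‖_{N_{i−1},p−1} : 1 ≤ i ≤ k, ran(x_i) ⊆ F } + ε, where the maximum over the empty set is taken to be 0. -/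

import Mathlib

open Filter

noncomputable section

/-- `c₀₀`: the finitely supported real sequences. -/
abbrev C00 : Type := ℕ →₀ ℝ

/-- The unit vector basis of `c₀₀`. -/
def eBasis (i : ℕ) : C00 := Finsupp.single i 1

/-- `f` is a norm on `c₀₀`. -/
def IsNorm (f : C00 → ℝ) : Prop :=
  (∀ v w : C00, f (v + w) ≤ f v + f w) ∧
  (∀ (c : ℝ) (v : C00), f (c • v) = |c| * f v) ∧
  (∀ v : C00, v ≠ 0 → 0 < f v)

/-- `E < F` for finite sets of naturals: every element of `E` is smaller than
every element of `F` (vacuously true if one of them is empty). -/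
def FinLt (E F : Finset ℕ) : Prop := ∀ a ∈ E, ∀ b ∈ F, a < b

/-- `min ran(v)` = the minimum of the support of `v`. -/
def minSupp (v : C00) : ℕ := sInf {j | v j ≠ 0}

/-- `max ran(v)` = the maximum of the support of `v`. -/
def maxSupp (v : C00) : ℕ := sSup {j | v j ≠ 0}

/-- `ran(v)`: the smallest integer interval containing the support of `v`. -/
def ranSet (v : C00) : Set ℕ := Set.Icc (minSupp v) (maxSupp v)

/-- `E` is an interval of naturals. -/
def IsInterval (E : Finset ℕ) : Prop :=
  ∀ a ∈ E, ∀ b ∈ E, ∀ c : ℕ, a ≤ c → c ≤ b → c ∈ E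

/-- The Schreier families `S_n`, `n ∈ ℕ`. -/
def SchreierFam : ℕ → Set (Finset ℕ)
  | 0 => {F : Finset ℕ | F.card ≤ 1}
  | (n + 1) => {F : Finset ℕ | ∃ (k : ℕ) (Fs : Fin k → Finset ℕ),
      (∀ i, Fs i ∈ SchreierFam n) ∧
      (∀ i j : Fin k, i < j → FinLt (Fs i) (Fs j)) ∧
      (∀ i, ∀ a ∈ Fs i, k ≤ a) ∧
      F = Finset.univ.biUnion Fs}

/-- `S_ω = {F : n ≤ F and F ∈ S_n for some n}`. -/
def SchreierOmega : Set (Finset ℕ) :=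
  {F : Finset ℕ | ∃ n : ℕ, (∀ a ∈ F, n ≤ a) ∧ F ∈ SchreierFam n}

/-- The restriction `Ex` of `x` to a finite set `E`. -/
def restr (E : Finset ℕ) (v : C00) : C00 := v.filter (fun j => j ∈ E)

/-- `(E_i)` is an admissible family of (nonempty, finite) sets for the family `S`:
`E_1 < E_2 < ⋯` and `{min E_i} ∈ S`. -/
def AdmissibleSets (S : Set (Finset ℕ)) {m : ℕ} (E : Fin m → Finset ℕ) : Prop :=
  (∀ i, (E i).Nonempty) ∧
  (∀ i j : Fin m, i < j → FinLt (E i) (E j)) ∧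
  (Finset.univ.image fun i => sInf ((E i : Set ℕ))) ∈ S

/-- `(E_i)` is an admissible family of (nonempty) intervals for the family `S`. -/
def AdmissibleIntervals (S : Set (Finset ℕ)) {m : ℕ} (E : Fin m → Finset ℕ) : Prop :=
  (∀ i, (E i).Nonempty ∧ IsInterval (E i)) ∧
  (∀ i j : Fin m, i < j → FinLt (E i) (E j)) ∧
  (Finset.univ.image fun i => sInf ((E i : Set ℕ))) ∈ S

/-- `nrm` satisfies the implicit mixed Tsirelson norm equation with parameters `θ_q`
and families `Sq q` (`q ≥ 1`):
`‖x‖ = max(‖x‖_∞, sup{θ_q Σ ‖E_i x‖ : q ≥ 1, (E_i) q-admissible})`. -/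
def MixedTsirelsonNormGen (θ : ℕ → ℝ) (Sq : ℕ → Set (Finset ℕ)) (nrm : C00 → ℝ) : Prop :=
  ∀ x : C00, nrm x =
    max (sSup {r : ℝ | ∃ j : ℕ, r = |x j|})
      (sSup {r : ℝ | ∃ (q m : ℕ) (E : Fin m → Finset ℕ), 1 ≤ q ∧
        AdmissibleSets (Sq q) E ∧ r = θ q * ∑ i, nrm (restr (E i) x)})

/-- `nrm` is the norm of the mixed Tsirelson space `T(θ_n, S_n)_{n ∈ ℕ}`. -/
def MixedTsirelsonNorm (θ : ℕ → ℝ) (nrm : C00 → ℝ) : Prop :=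
  MixedTsirelsonNormGen θ SchreierFam nrm

/-- `(θ_n)_{n ≥ 1}` is a regular sequence. -/
def RegularSeq (θ : ℕ → ℝ) : Prop :=
  (∀ n : ℕ, 1 ≤ n → 0 < θ n ∧ θ n < 1) ∧
  (∀ n : ℕ, 1 ≤ n → θ (n + 1) ≤ θ n) ∧
  Tendsto θ atTop (nhds 0) ∧
  (∀ n m : ℕ, 1 ≤ n → 1 ≤ m → θ n * θ m ≤ θ (n + m))

/-- The `i`-th block `Σ_{j = m_i}^{m_{i+1} - 1} a_j x_j` of a block sequence of `(x_j)`
with coefficients `a` and breakpoints `m`. -/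
def blk (x : ℕ → C00) (a : ℕ → ℝ) (m : ℕ → ℕ) (i : ℕ) : C00 :=
  ∑ j ∈ Finset.Ico (m i) (m (i + 1)), a j • x j

/-- The minimum of the range w.r.t. `(x_j)` of the `i`-th block: the least `j` in
`[m_i, m_{i+1})` with `a_j ≠ 0`. -/
def minRangeIdx (a : ℕ → ℝ) (m : ℕ → ℕ) (i : ℕ) : ℕ :=
  sInf {j : ℕ | j ∈ Finset.Ico (m i) (m (i + 1)) ∧ a j ≠ 0}

/-- `(x_i)` is an (infinite) block sequence of `(e_i)`: nonzero and `x_1 < x_2 < ⋯`. -/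
def IsBlockSeq (x : ℕ → C00) : Prop :=
  (∀ i, x i ≠ 0) ∧ ∀ i, FinLt (x i).support (x (i + 1)).support

/-- `(z_i)` is an (infinite) block sequence of `(x_i)`. -/
def IsBlockOf (x z : ℕ → C00) : Prop :=
  ∃ (a : ℕ → ℝ) (m : ℕ → ℕ), StrictMono m ∧ (∀ i, z i = blk x a m i) ∧ ∀ i, z i ≠ 0

/-- The set of `δ ≥ 0` witnessing the `ℓ_1`-estimate for all finite block sequences of
`(x_i)` that are admissible (for the family `S`) *with respect to `(x_i)`*. -/
def deltaSetX (S : Set (Finset ℕ)) (nrm : C00 → ℝ) (x : ℕ → C00) : Set ℝ :=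
  {δ : ℝ | 0 ≤ δ ∧ ∀ (n : ℕ) (a : ℕ → ℝ) (m : ℕ → ℕ), StrictMono m →
    (∀ i < n, blk x a m i ≠ 0) →
    (Finset.range n).image (fun i => minRangeIdx a m i) ∈ S →
    δ * ∑ i ∈ Finset.range n, nrm (blk x a m i) ≤
      nrm (∑ i ∈ Finset.range n, blk x a m i)}

/-- The set of `δ ≥ 0` witnessing the `ℓ_1`-estimate for all finite block sequences of
`(x_i)` that are admissible (for the family `S`) *with respect to `(e_i)`*. -/
def deltaSetE (S : Set (Finset ℕ)) (nrm : C00 → ℝ) (x : ℕ → C00) : Set ℝ :=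
  {δ : ℝ | 0 ≤ δ ∧ ∀ (n : ℕ) (a : ℕ → ℝ) (m : ℕ → ℕ), StrictMono m →
    (∀ i < n, blk x a m i ≠ 0) →
    (Finset.range n).image (fun i => minSupp (blk x a m i)) ∈ S →
    δ * ∑ i ∈ Finset.range n, nrm (blk x a m i) ≤
      nrm (∑ i ∈ Finset.range n, blk x a m i)}

/-- `δ_α(x_i)` (α-admissibility w.r.t. `(x_i)`), for the α-th family `S`. -/
def deltaX (S : Set (Finset ℕ)) (nrm : C00 → ℝ) (x : ℕ → C00) : ℝ :=
  sSup (deltaSetX S nrm x)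

/-- `δ_α((x_i),(e_i))` (α-admissibility w.r.t. `(e_i)`), for the α-th family `S`. -/
def deltaE (S : Set (Finset ℕ)) (nrm : C00 → ℝ) (x : ℕ → C00) : ℝ :=
  sSup (deltaSetE S nrm x)

/-- `nrm'` is an equivalent norm to `nrm`. -/
def EquivNormOn (nrm nrm' : C00 → ℝ) : Prop :=
  ∃ c C : ℝ, 0 < c ∧ (∀ x, c * nrm x ≤ nrm' x) ∧ ∀ x, nrm' x ≤ C * nrm x

/-- The set whose supremum is `δ̈`(S)`(y_i)`: all values `δ_S((z_i), |·|)` where `|·|`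
is an equivalent norm on `X` and `(z_i)` is a block sequence of `(y_i)`. -/
def dessSet (S : Set (Finset ℕ)) (nrm : C00 → ℝ) (y : ℕ → C00) : Set ℝ :=
  {d : ℝ | ∃ (nrm' : C00 → ℝ) (z : ℕ → C00), IsNorm nrm' ∧ EquivNormOn nrm nrm' ∧
    IsBlockOf y z ∧ d = deltaX S nrm' z}

/-- A Schreier hierarchy `(S_α)_{α < ω₁}`. -/
structure IsSchreierHierarchy (S : Ordinal → Set (Finset ℕ)) : Prop where
  zero : S 0 = {F : Finset ℕ | F.card ≤ 1}
  succ : ∀ α : Ordinal, α < Ordinal.omega 1 →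
    S (α + 1) = {F : Finset ℕ | ∃ (k : ℕ) (Fs : Fin k → Finset ℕ),
      (∀ i, Fs i ∈ S α) ∧
      (∀ i j : Fin k, i < j → FinLt (Fs i) (Fs j)) ∧
      (∀ i, ∀ a ∈ Fs i, k ≤ a) ∧
      F = Finset.univ.biUnion Fs}
  limit : ∀ α : Ordinal, α < Ordinal.omega 1 → Order.IsSuccLimit α →
    ∃ f : ℕ → Ordinal, StrictMono f ∧ (⨆ n, f n) = α ∧
      S α = {F : Finset ℕ | ∃ n : ℕ, (∀ a ∈ F, n ≤ a) ∧ F ∈ S (f n)}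

/-- `(y_i)` Δ-stabilizes `γ = (γ_α)_{α<ω₁}`. -/
def DeltaStabilizes (S : Ordinal → Set (Finset ℕ)) (nrm : C00 → ℝ)
    (y : ℕ → C00) (γ : Ordinal → ℝ) : Prop :=
  ∃ ε : ℕ → ℝ, Antitone ε ∧ Tendsto ε atTop (nhds 0) ∧
    ∀ α : Ordinal, α < Ordinal.omega 1 → ∃ m : ℕ, ∀ n : ℕ, m ≤ n →
      ∀ z : ℕ → C00, IsBlockOf (fun i => y (i + n)) z →
        |deltaX (S α) nrm z - γ α| < ε n

/-- `(y_i)` Δ_{(e_i)}-stabilizes `γ = (γ_α)_{α<ω₁}`. -/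
def DeltaStabilizesE (S : Ordinal → Set (Finset ℕ)) (nrm : C00 → ℝ)
    (y : ℕ → C00) (γ : Ordinal → ℝ) : Prop :=
  ∃ ε : ℕ → ℝ, Antitone ε ∧ Tendsto ε atTop (nhds 0) ∧
    ∀ α : Ordinal, α < Ordinal.omega 1 → ∃ m : ℕ, ∀ n : ℕ, m ≤ n →
      ∀ z : ℕ → C00, IsBlockOf (fun i => y (i + n)) z →
        |deltaE (S α) nrm z - γ α| < ε n

/-- `(e_i)` is a basic sequence for the norm `nrm`. -/
def IsBasicE (nrm : C00 → ℝ) : Prop :=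
  ∃ K : ℝ, ∀ (a : ℕ → ℝ) (m n : ℕ), m ≤ n →
    nrm (∑ i ∈ Finset.range m, a i • eBasis i) ≤
      K * nrm (∑ i ∈ Finset.range n, a i • eBasis i)

/-- The auxiliary norm `‖x‖_p` (`‖·‖_0 = ‖·‖`). -/
def pnorm (θ : ℕ → ℝ) (nrm : C00 → ℝ) (p : ℕ) (x : C00) : ℝ :=
  if p = 0 then nrm x
  else θ p * sSup {r : ℝ | ∃ (m : ℕ) (E : Fin m → Finset ℕ),
    AdmissibleIntervals (SchreierFam p) E ∧ r = ∑ i, nrm (restr (E i) x)}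

/-- The auxiliary seminorm `‖x‖_{N,p}`. -/
def nNorm (θ : ℕ → ℝ) (nrm : C00 → ℝ) (N p : ℕ) (x : C00) : ℝ :=
  sSup {r : ℝ | ∃ E : Fin N → Finset ℕ, (∀ i, IsInterval (E i)) ∧
    (∀ i j : Fin N, i < j → FinLt (E i) (E j)) ∧ (∀ i, ∀ a ∈ E i, N ≤ a) ∧
    r = ∑ i, pnorm θ nrm p (restr (E i) x)}

/-- The auxiliary norm `‖x‖_{S_q,p}`. -/
def sNNorm (θ : ℕ → ℝ) (nrm : C00 → ℝ) (q p : ℕ) (x : C00) : ℝ :=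
  sSup {r : ℝ | ∃ (m : ℕ) (E : Fin m → Finset ℕ),
    AdmissibleIntervals (SchreierFam q) E ∧ r = ∑ i, pnorm θ nrm p (restr (E i) x)}

section Aux

open Finset

lemma restr_apply (E : Finset ℕ) (v : C00) (j : ℕ) :
    restr E v j = if j ∈ E then v j else 0 := by
  simp [restr, Finsupp.filter_apply]

lemma restr_restr (E G : Finset ℕ) (v : C00) :
    restr E (restr G v) = restr (E ∩ G) v := by
  ext j; simp only [restr_apply, Finset.mem_inter]
  by_cases h1 : j ∈ E <;> by_cases h2 : j ∈ G <;> simp [h1, h2]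

lemma restr_supp_subset (E : Finset ℕ) (v : C00) :
    (restr E v).support ⊆ v.support ∩ E := by
  intro j hj
  rw [Finsupp.mem_support_iff, restr_apply] at hj
  by_cases h : j ∈ E
  · simp [h] at hj; simp [Finset.mem_inter, h, Finsupp.mem_support_iff, hj]
  · simp [h] at hj

lemma restr_eq_self (E : Finset ℕ) (v : C00) (h : ∀ j ∈ v.support, j ∈ E) :
    restr E v = v := by
  ext j; rw [restr_apply]
  by_cases hj : j ∈ E
  · simp [hj]
  · simp only [hj, if_false]
    by_cases hv : v j = 0
    · exact hv.symm
    · exact absurd (h j (Finsupp.mem_support_iff.2 hv)) hj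

lemma restr_eq_zero (E : Finset ℕ) (v : C00) (h : ∀ j ∈ v.support, j ∉ E) :
    restr E v = 0 := by
  ext j; rw [restr_apply]
  by_cases hj : j ∈ E
  · by_cases hv : v j = 0
    · simp [hj, hv]
    · exact absurd hj (h j (Finsupp.mem_support_iff.2 hv))
  · simp [hj]

lemma restr_empty (v : C00) : restr (∅ : Finset ℕ) v = 0 :=
  restr_eq_zero _ _ (by simp)

lemma restr_zero (E : Finset ℕ) : restr E (0 : C00) = 0 := by
  ext j; rw [restr_apply]; simp

lemma restr_add (E : Finset ℕ) (v w : C00) :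
    restr E (v + w) = restr E v + restr E w := by
  ext j; simp only [Finsupp.add_apply, restr_apply]
  by_cases h : j ∈ E <;> simp [h]

lemma restr_smul (E : Finset ℕ) (c : ℝ) (v : C00) :
    restr E (c • v) = c • restr E v := by
  ext j; simp only [Finsupp.smul_apply, restr_apply, smul_eq_mul]
  by_cases h : j ∈ E <;> simp [h]

lemma restr_sum (E : Finset ℕ) {ι : Type*} (s : Finset ι) (f : ι → C00) :
    restr E (∑ i ∈ s, f i) = ∑ i ∈ s, restr E (f i) := by
  classical
  induction s using Finset.induction with
  | empty => simp [restr_zero]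
  | insert _ _ h ih => rw [Finset.sum_insert h, restr_add, ih, Finset.sum_insert h]

end Aux
section Aux2

open Finset

lemma nrm_zero {nrm : C00 → ℝ} (hn : IsNorm nrm) : nrm 0 = 0 := by
  have := hn.2.1 0 0; simpa using this

lemma nrm_nonneg {nrm : C00 → ℝ} (hn : IsNorm nrm) (v : C00) : 0 ≤ nrm v := by
  have h1 := hn.1 v (-v)
  have h2 : nrm (-v) = nrm v := by
    have := hn.2.1 (-1) v; simpa using this
  have h0 : nrm (v + -v) = 0 := by rw [add_neg_cancel, nrm_zero hn]
  nlinarith [h1, h2, h0]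

lemma nrm_sum_le {nrm : C00 → ℝ} (hn : IsNorm nrm) {ι : Type*} (s : Finset ι) (f : ι → C00) :
    nrm (∑ i ∈ s, f i) ≤ ∑ i ∈ s, nrm (f i) := by
  classical
  induction s using Finset.induction with
  | empty => simp [nrm_zero hn]
  | insert _ _ h ih =>
      rw [Finset.sum_insert h, Finset.sum_insert h]
      exact le_trans (hn.1 _ _) (by linarith)

lemma supp_set_eq (v : C00) : {j | v j ≠ 0} = (v.support : Set ℕ) := by
  ext j; simp [Finsupp.mem_support_iff]

lemma supp_set_nonempty {v : C00} (hv : v ≠ 0) : {j | v j ≠ 0}.Nonempty := by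
  rcases Finsupp.ne_iff.1 hv with ⟨j, hj⟩
  exact ⟨j, by simpa using hj⟩

lemma supp_set_bdd (v : C00) : BddAbove {j | v j ≠ 0} := by
  rw [supp_set_eq]; exact (v.support).bddAbove

lemma minSupp_mem {v : C00} (hv : v ≠ 0) : v (minSupp v) ≠ 0 :=
  Nat.sInf_mem (supp_set_nonempty hv)

lemma minSupp_le {v : C00} {j : ℕ} (hj : v j ≠ 0) : minSupp v ≤ j :=
  Nat.sInf_le hj

lemma le_maxSupp {v : C00} {j : ℕ} (hj : v j ≠ 0) : j ≤ maxSupp v :=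
  le_csSup (supp_set_bdd v) hj

lemma maxSupp_mem {v : C00} (hv : v ≠ 0) : v (maxSupp v) ≠ 0 :=
  Nat.sSup_mem (supp_set_nonempty hv) (supp_set_bdd v)

lemma minSupp_le_maxSupp {v : C00} (hv : v ≠ 0) : minSupp v ≤ maxSupp v :=
  le_maxSupp (minSupp_mem hv)

lemma supp_subset_ranSet {v : C00} {j : ℕ} (hj : v j ≠ 0) : j ∈ ranSet v :=
  ⟨minSupp_le hj, le_maxSupp hj⟩

end Aux2
section Aux3

open Finset

lemma theta_pos {θ : ℕ → ℝ} (hreg : RegularSeq θ) (hθ0 : θ 0 = 1) (q : ℕ) : 0 < θ q := by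
  rcases Nat.eq_zero_or_pos q with h | h
  · rw [h, hθ0]; norm_num
  · exact (hreg.1 q h).1

lemma theta_le_one {θ : ℕ → ℝ} (hreg : RegularSeq θ) (hθ0 : θ 0 = 1) (q : ℕ) : θ q ≤ 1 := by
  rcases Nat.eq_zero_or_pos q with h | h
  · rw [h, hθ0]
  · exact le_of_lt (hreg.1 q h).2

lemma theta_le_theta1 {θ : ℕ → ℝ} (hreg : RegularSeq θ) {q : ℕ} (hq : 1 ≤ q) : θ q ≤ θ 1 := by
  induction q with
  | zero => omega
  | succ n ih =>
      rcases Nat.eq_zero_or_pos n with h | h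
      · simp [h]
      · exact le_trans (hreg.2.1 n h) (ih h)

lemma restr_as_sum (E : Finset ℕ) (v : C00) :
    restr E v = ∑ j ∈ v.support.filter (fun j => j ∈ E), Finsupp.single j (v j) := by
  ext a
  rw [restr_apply, Finset.sum_apply']
  by_cases ha : a ∈ E
  · simp only [ha, if_true]
    by_cases hav : v a = 0
    · rw [hav, Finset.sum_eq_zero]
      intro j hj
      rcases eq_or_ne j a with rfl | hja
      · simp [hav]
      · exact Finsupp.single_eq_of_ne' hja
    · rw [Finset.sum_eq_single a]
      · simp
      · intro j _ hja; exact Finsupp.single_eq_of_ne' hja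
      · intro hna; exact absurd (Finset.mem_filter.2 ⟨Finsupp.mem_support_iff.2 hav, ha⟩) hna
  · simp only [ha, if_false]
    rw [Finset.sum_eq_zero]
    intro j hj
    rcases eq_or_ne j a with rfl | hja
    · exact absurd (Finset.mem_filter.1 hj).2 ha
    · exact Finsupp.single_eq_of_ne' hja

/-- The uniform bound for `nrm (restr E v)`. -/
def nrmBound (nrm : C00 → ℝ) (v : C00) : ℝ := ∑ j ∈ v.support, nrm (Finsupp.single j (v j))

lemma nrmBound_nonneg {nrm : C00 → ℝ} (hn : IsNorm nrm) (v : C00) : 0 ≤ nrmBound nrm v :=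
  Finset.sum_nonneg fun j _ => nrm_nonneg hn _

lemma nrm_restr_le_nrmBound {nrm : C00 → ℝ} (hn : IsNorm nrm) (E : Finset ℕ) (v : C00) :
    nrm (restr E v) ≤ nrmBound nrm v := by
  rw [restr_as_sum]
  refine le_trans (nrm_sum_le hn _ _) ?_
  exact Finset.sum_le_sum_of_subset_of_nonneg (Finset.filter_subset _ _)
    (fun j _ _ => nrm_nonneg hn _)

lemma sum_nrm_restr_le {nrm : C00 → ℝ} (hn : IsNorm nrm) (v : C00) {m : ℕ}
    (E : Fin m → Finset ℕ) (hord : ∀ i j : Fin m, i < j → FinLt (E i) (E j)) :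
    ∑ i, nrm (restr (E i) v) ≤ (v.support.card : ℝ) * nrmBound nrm v := by
  classical
  set T : Finset (Fin m) := Finset.univ.filter (fun i => ((E i) ∩ v.support).Nonempty) with hT
  have hmemT : ∀ i : Fin m, i ∈ T ↔ ((E i) ∩ v.support).Nonempty := by
    intro i; rw [hT, Finset.mem_filter]; simp
  have hzero : ∀ i ∈ Finset.univ \ T, nrm (restr (E i) v) = 0 := by
    intro i hi
    rw [Finset.mem_sdiff] at hi
    have hni : ¬ ((E i) ∩ v.support).Nonempty := fun hne => hi.2 ((hmemT i).2 hne)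
    have hemp : ∀ j ∈ v.support, j ∉ E i := by
      intro j hj hjE
      exact hni ⟨j, Finset.mem_inter.2 ⟨hjE, hj⟩⟩
    rw [restr_eq_zero _ _ hemp, nrm_zero hn]
  have hsplit : ∑ i, nrm (restr (E i) v) = ∑ i ∈ T, nrm (restr (E i) v) := by
    rw [← Finset.sum_subset (Finset.subset_univ T)]
    intro i hi hit
    exact hzero i (Finset.mem_sdiff.2 ⟨hi, hit⟩)
  rw [hsplit]
  have hcard : T.card ≤ v.support.card := by
    refine Finset.card_le_card_of_injOn
      (fun i => sInf (((E i) ∩ v.support : Finset ℕ) : Set ℕ)) ?_ ?_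
    · intro i hi
      have hne : (((E i) ∩ v.support : Finset ℕ) : Set ℕ).Nonempty := by
        obtain ⟨a, ha⟩ := (hmemT i).1 hi
        exact ⟨a, by exact_mod_cast ha⟩
      have := Nat.sInf_mem hne
      have : sInf (((E i) ∩ v.support : Finset ℕ) : Set ℕ) ∈ (E i) ∩ v.support := by
        exact_mod_cast this
      exact (Finset.mem_inter.1 this).2
    · intro i hi j hj hij
      rw [Finset.mem_coe] at hi hj
      by_contra hne
      have hmem : ∀ l : Fin m, l ∈ T →
          sInf (((E l) ∩ v.support : Finset ℕ) : Set ℕ) ∈ E l := by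
        intro l hl
        have hne2 : (((E l) ∩ v.support : Finset ℕ) : Set ℕ).Nonempty := by
          obtain ⟨a, ha⟩ := (hmemT l).1 hl
          exact ⟨a, by exact_mod_cast ha⟩
        have := Nat.sInf_mem hne2
        have : sInf (((E l) ∩ v.support : Finset ℕ) : Set ℕ) ∈ (E l) ∩ v.support := by
          exact_mod_cast this
        exact (Finset.mem_inter.1 this).1
      rcases lt_or_gt_of_ne hne with h | h
      · exact absurd hij (ne_of_lt (hord i j h _ (hmem i hi) _ (hmem j hj)))
      · exact absurd hij.symm (ne_of_lt (hord j i h _ (hmem j hj) _ (hmem i hi)))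
  calc ∑ i ∈ T, nrm (restr (E i) v) ≤ ∑ _i ∈ T, nrmBound nrm v :=
        Finset.sum_le_sum (fun i _ => nrm_restr_le_nrmBound hn _ _)
    _ = (T.card : ℝ) * nrmBound nrm v := by rw [Finset.sum_const, nsmul_eq_mul]
    _ ≤ (v.support.card : ℝ) * nrmBound nrm v := by
        apply mul_le_mul_of_nonneg_right _ (nrmBound_nonneg hn v)
        exact_mod_cast hcard

lemma bddAbove_hT_set {θ : ℕ → ℝ} (hreg : RegularSeq θ) (hθ0 : θ 0 = 1)
    {nrm : C00 → ℝ} (hn : IsNorm nrm) (v : C00) :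
    BddAbove {r : ℝ | ∃ (q m : ℕ) (E : Fin m → Finset ℕ), 1 ≤ q ∧
      AdmissibleSets (SchreierFam q) E ∧ r = θ q * ∑ i, nrm (restr (E i) v)} := by
  refine ⟨(v.support.card : ℝ) * nrmBound nrm v, ?_⟩
  rintro r ⟨q, m, E, hq, hadm, rfl⟩
  have hsum : ∑ i, nrm (restr (E i) v) ≤ (v.support.card : ℝ) * nrmBound nrm v :=
    sum_nrm_restr_le hn v E hadm.2.1
  have hsnn : 0 ≤ ∑ i, nrm (restr (E i) v) :=
    Finset.sum_nonneg fun i _ => nrm_nonneg hn _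
  calc θ q * ∑ i, nrm (restr (E i) v) ≤ 1 * ∑ i, nrm (restr (E i) v) :=
        mul_le_mul_of_nonneg_right (theta_le_one hreg hθ0 q) hsnn
    _ = ∑ i, nrm (restr (E i) v) := one_mul _
    _ ≤ _ := hsum

lemma bddAbove_pnorm_set {nrm : C00 → ℝ} (hn : IsNorm nrm) (p : ℕ) (v : C00) :
    BddAbove {r : ℝ | ∃ (m : ℕ) (E : Fin m → Finset ℕ),
      AdmissibleIntervals (SchreierFam p) E ∧ r = ∑ i, nrm (restr (E i) v)} := by
  refine ⟨(v.support.card : ℝ) * nrmBound nrm v, ?_⟩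
  rintro r ⟨m, E, hadm, rfl⟩
  exact sum_nrm_restr_le hn v E hadm.2.1

lemma empty_mem_schreier (p : ℕ) : (∅ : Finset ℕ) ∈ SchreierFam p := by
  cases p with
  | zero => simp [SchreierFam]
  | succ n =>
      refine ⟨0, (fun i => ∅), ?_, ?_, ?_, ?_⟩
      · exact fun i => i.elim0
      · exact fun i => i.elim0
      · exact fun i => i.elim0
      · simp

lemma zero_mem_pnorm_set {nrm : C00 → ℝ} (hn : IsNorm nrm) (p : ℕ) (v : C00) :
    (0 : ℝ) ∈ {r : ℝ | ∃ (m : ℕ) (E : Fin m → Finset ℕ),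
      AdmissibleIntervals (SchreierFam p) E ∧ r = ∑ i, nrm (restr (E i) v)} := by
  refine ⟨0, (fun i => i.elim0), ⟨fun i => i.elim0, fun i => i.elim0, ?_⟩, ?_⟩
  · have : (Finset.univ : Finset (Fin 0)).image
        (fun i => sInf (((fun _ : Fin 0 => (∅ : Finset ℕ)) i : Finset ℕ) : Set ℕ)) = ∅ := by
      simp
    simpa using empty_mem_schreier p
  · rw [Finset.univ_eq_empty, Finset.sum_empty]

lemma coord_le_nrm {θ : ℕ → ℝ} {nrm : C00 → ℝ}
    (hT : MixedTsirelsonNorm θ nrm) (v : C00) (j : ℕ) : |v j| ≤ nrm v := by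
  have heq := hT v
  have hb : BddAbove {r : ℝ | ∃ j : ℕ, r = |v j|} := by
    refine ⟨∑ a ∈ v.support, |v a|, ?_⟩
    rintro r ⟨i, rfl⟩
    by_cases hi : v i = 0
    · rw [hi, abs_zero]
      exact Finset.sum_nonneg fun a _ => abs_nonneg _
    · exact Finset.single_le_sum (f := fun a => |v a|) (fun a _ => abs_nonneg _) (Finsupp.mem_support_iff.2 hi)
  have h1 : |v j| ≤ sSup {r : ℝ | ∃ j : ℕ, r = |v j|} := le_csSup hb ⟨j, rfl⟩
  rw [heq]
  exact le_trans h1 (le_max_left _ _)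

lemma admissible_le_nrm {θ : ℕ → ℝ} (hreg : RegularSeq θ) (hθ0 : θ 0 = 1)
    {nrm : C00 → ℝ} (hn : IsNorm nrm) (hT : MixedTsirelsonNorm θ nrm)
    {q m : ℕ} (hq : 1 ≤ q) (E : Fin m → Finset ℕ)
    (hadm : AdmissibleSets (SchreierFam q) E) (v : C00) :
    θ q * ∑ i, nrm (restr (E i) v) ≤ nrm v := by
  have hmem : θ q * ∑ i, nrm (restr (E i) v) ∈ {r : ℝ | ∃ (q m : ℕ) (E : Fin m → Finset ℕ),
      1 ≤ q ∧ AdmissibleSets (SchreierFam q) E ∧ r = θ q * ∑ i, nrm (restr (E i) v)} :=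
    ⟨q, m, E, hq, hadm, rfl⟩
  have h1 := le_csSup (bddAbove_hT_set hreg hθ0 hn v) hmem
  rw [hT v]
  exact le_trans h1 (le_max_right _ _)

end Aux3
section Aux4

open Finset

/-- Restriction to a set does not increase the norm. -/
lemma nrm_restr_le {θ : ℕ → ℝ} (hreg : RegularSeq θ) (hθ0 : θ 0 = 1)
    {nrm : C00 → ℝ} (hn : IsNorm nrm) (hT : MixedTsirelsonNorm θ nrm) :
    ∀ (v : C00) (E : Finset ℕ), nrm (restr E v) ≤ nrm v := by
  suffices H : ∀ (n : ℕ) (v : C00), v.support.card ≤ n → ∀ E : Finset ℕ,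
      nrm (restr E v) ≤ nrm v by
    exact fun v E => H v.support.card v le_rfl E
  intro n
  induction n with
  | zero =>
      intro v hv E
      have : v = 0 := by
        rw [← Finsupp.support_eq_empty]
        exact Finset.card_eq_zero.1 (Nat.le_zero.1 hv)
      subst this
      rw [restr_zero]
  | succ n ih =>
      intro v hv E
      by_cases hw : restr E v = 0
      · rw [hw, nrm_zero hn]; exact nrm_nonneg hn v
      set w := restr E v with hwdef
      have hsuppw : w.support ⊆ v.support := by
        intro j hj
        exact (Finset.mem_inter.1 (restr_supp_subset E v hj)).1
      have key : nrm w ≤ max (θ 1 * nrm w) (nrm v) := by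
        conv_lhs => rw [hT w]
        apply max_le
        · apply Real.sSup_le
          · rintro r ⟨j, rfl⟩
            refine le_trans ?_ (le_max_right _ _)
            rw [hwdef, restr_apply]
            by_cases hj : j ∈ E
            · rw [if_pos hj]; exact coord_le_nrm hT v j
            · rw [if_neg hj, abs_zero]; exact nrm_nonneg hn v
          · exact le_trans (nrm_nonneg hn v) (le_max_right _ _)
        · apply Real.sSup_le
          · rintro r ⟨q, m, G, hq, hadm, rfl⟩
            by_cases hex : ∃ i : Fin m, ∀ j ∈ v.support, j ∈ G i
            · obtain ⟨i0, hi0⟩ := hex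
              have hwi0 : restr (G i0) w = w := by
                apply restr_eq_self
                intro j hj
                exact hi0 j (hsuppw hj)
              have hothers : ∀ i : Fin m, i ≠ i0 → nrm (restr (G i) w) = 0 := by
                intro i hi
                have : restr (G i) w = 0 := by
                  apply restr_eq_zero
                  intro j hj hjG
                  have hjG0 : j ∈ G i0 := hi0 j (hsuppw hj)
                  rcases lt_or_gt_of_ne hi with h | h
                  · exact lt_irrefl j (hadm.2.1 i i0 h j hjG j hjG0)
                  · exact lt_irrefl j (hadm.2.1 i0 i h j hjG0 j hjG)
                rw [this, nrm_zero hn]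
              have hsum : ∑ i, nrm (restr (G i) w) = nrm w := by
                rw [Finset.sum_eq_single i0]
                · rw [hwi0]
                · intro i _ hi; exact hothers i hi
                · intro h; exact absurd (Finset.mem_univ i0) h
              rw [hsum]
              refine le_trans ?_ (le_max_left _ _)
              exact mul_le_mul_of_nonneg_right (theta_le_theta1 hreg hq) (nrm_nonneg hn w)
            · push_neg at hex
              refine le_trans ?_ (le_max_right _ _)
              have hterm : ∀ i : Fin m, nrm (restr (G i) w) ≤ nrm (restr (G i) v) := by
                intro i
                have heq1 : restr (G i) w = restr E (restr (G i) v) := by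
                  rw [hwdef, restr_restr, restr_restr, Finset.inter_comm]
                rw [heq1]
                apply ih
                obtain ⟨j, hjsupp, hjG⟩ := hex i
                have hsub : (restr (G i) v).support ⊆ v.support.erase j := by
                  intro a ha
                  have hmem := restr_supp_subset (G i) v ha
                  rw [Finset.mem_inter] at hmem
                  refine Finset.mem_erase.2 ⟨?_, hmem.1⟩
                  intro h; subst h; exact hjG hmem.2
                calc (restr (G i) v).support.card ≤ (v.support.erase j).card :=
                      Finset.card_le_card hsub
                  _ = v.support.card - 1 := Finset.card_erase_of_mem hjsupp
                  _ ≤ n := by omega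
              calc θ q * ∑ i, nrm (restr (G i) w) ≤ θ q * ∑ i, nrm (restr (G i) v) := by
                    apply mul_le_mul_of_nonneg_left (Finset.sum_le_sum fun i _ => hterm i)
                    exact le_of_lt (theta_pos hreg hθ0 q)
                _ ≤ nrm v := admissible_le_nrm hreg hθ0 hn hT hq G hadm v
          · exact le_trans (nrm_nonneg hn v) (le_max_right _ _)
      rcases le_or_gt (nrm w) (nrm v) with h | h
      · exact h
      · rcases max_cases (θ 1 * nrm w) (nrm v) with ⟨hmax, _⟩ | ⟨hmax, _⟩
        · rw [hmax] at key
          have hθ1 := (hreg.1 1 le_rfl).2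
          have hwnn := nrm_nonneg hn w
          nlinarith [nrm_nonneg hn v]
        · rw [hmax] at key; exact key

end Aux4
section Aux5

open Finset

lemma admInt_to_admSets {S : Set (Finset ℕ)} {m : ℕ} {E : Fin m → Finset ℕ}
    (h : AdmissibleIntervals S E) : AdmissibleSets S E :=
  ⟨fun i => (h.1 i).1, h.2.1, h.2.2⟩

lemma pnorm_of_zero {θ : ℕ → ℝ} {nrm : C00 → ℝ} (hn : IsNorm nrm) (p : ℕ) :
    pnorm θ nrm p 0 = 0 := by
  rcases Nat.eq_zero_or_pos p with h | h
  · rw [pnorm, if_pos h, nrm_zero hn]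
  · rw [pnorm, if_neg (Nat.pos_iff_ne_zero.1 h)]
    have hsup : sSup {r : ℝ | ∃ (m : ℕ) (E : Fin m → Finset ℕ),
        AdmissibleIntervals (SchreierFam p) E ∧ r = ∑ i, nrm (restr (E i) (0 : C00))} = 0 := by
      apply le_antisymm
      · apply Real.sSup_le
        · rintro r ⟨m, E, _, rfl⟩
          apply le_of_eq
          apply Finset.sum_eq_zero
          intro i _
          rw [restr_zero, nrm_zero hn]
        · exact le_rfl
      · apply Real.sSup_nonneg
        rintro r ⟨m, E, _, rfl⟩
        exact Finset.sum_nonneg fun i _ => nrm_nonneg hn _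
    rw [hsup, mul_zero]

lemma pnorm_nonneg {θ : ℕ → ℝ} (hreg : RegularSeq θ) (hθ0 : θ 0 = 1)
    {nrm : C00 → ℝ} (hn : IsNorm nrm) (p : ℕ) (v : C00) :
    0 ≤ pnorm θ nrm p v := by
  rcases Nat.eq_zero_or_pos p with h | h
  · rw [pnorm, if_pos h]; exact nrm_nonneg hn v
  · rw [pnorm, if_neg (Nat.pos_iff_ne_zero.1 h)]
    apply mul_nonneg (le_of_lt (theta_pos hreg hθ0 p))
    apply Real.sSup_nonneg
    rintro r ⟨m, E, _, rfl⟩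
    exact Finset.sum_nonneg fun i _ => nrm_nonneg hn _

lemma pnorm_le_nrm {θ : ℕ → ℝ} (hreg : RegularSeq θ) (hθ0 : θ 0 = 1)
    {nrm : C00 → ℝ} (hn : IsNorm nrm) (hT : MixedTsirelsonNorm θ nrm) (p : ℕ) (v : C00) :
    pnorm θ nrm p v ≤ nrm v := by
  rcases Nat.eq_zero_or_pos p with h | h
  · rw [pnorm, if_pos h]
  · rw [pnorm, if_neg (Nat.pos_iff_ne_zero.1 h)]
    have hθp := theta_pos hreg hθ0 p
    have hsup : sSup {r : ℝ | ∃ (m : ℕ) (E : Fin m → Finset ℕ),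
        AdmissibleIntervals (SchreierFam p) E ∧ r = ∑ i, nrm (restr (E i) v)} ≤ nrm v / θ p := by
      apply Real.sSup_le
      · rintro r ⟨m, E, hadm, rfl⟩
        rw [le_div_iff₀ hθp, mul_comm]
        exact admissible_le_nrm hreg hθ0 hn hT h E (admInt_to_admSets hadm) v
      · exact div_nonneg (nrm_nonneg hn v) (le_of_lt hθp)
    calc θ p * _ ≤ θ p * (nrm v / θ p) := mul_le_mul_of_nonneg_left hsup (le_of_lt hθp)
      _ = nrm v := by field_simp

lemma pnorm_ge_admissible {θ : ℕ → ℝ} (hreg : RegularSeq θ) (hθ0 : θ 0 = 1)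
    {nrm : C00 → ℝ} (hn : IsNorm nrm) {p m : ℕ} (hp : 1 ≤ p)
    (E : Fin m → Finset ℕ) (hadm : AdmissibleIntervals (SchreierFam p) E) (w : C00) :
    θ p * ∑ i, nrm (restr (E i) w) ≤ pnorm θ nrm p w := by
  rw [pnorm, if_neg (by omega)]
  apply mul_le_mul_of_nonneg_left _ (le_of_lt (theta_pos hreg hθ0 p))
  exact le_csSup (bddAbove_pnorm_set hn p w) ⟨m, E, hadm, rfl⟩

lemma pnorm_restr_le_nrm {θ : ℕ → ℝ} (hreg : RegularSeq θ) (hθ0 : θ 0 = 1)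
    {nrm : C00 → ℝ} (hn : IsNorm nrm) (hT : MixedTsirelsonNorm θ nrm) (p : ℕ)
    (E : Finset ℕ) (v : C00) : pnorm θ nrm p (restr E v) ≤ nrm v :=
  le_trans (pnorm_le_nrm hreg hθ0 hn hT p _) (nrm_restr_le hreg hθ0 hn hT v E)

lemma bddAbove_nNorm_set {θ : ℕ → ℝ} (hreg : RegularSeq θ) (hθ0 : θ 0 = 1)
    {nrm : C00 → ℝ} (hn : IsNorm nrm) (hT : MixedTsirelsonNorm θ nrm) (N p : ℕ) (x : C00) :
    BddAbove {r : ℝ | ∃ E : Fin N → Finset ℕ, (∀ i, IsInterval (E i)) ∧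
      (∀ i j : Fin N, i < j → FinLt (E i) (E j)) ∧ (∀ i, ∀ a ∈ E i, N ≤ a) ∧
      r = ∑ i, pnorm θ nrm p (restr (E i) x)} := by
  refine ⟨(N : ℝ) * nrm x, ?_⟩
  rintro r ⟨E, _, _, _, rfl⟩
  calc ∑ i, pnorm θ nrm p (restr (E i) x) ≤ ∑ _i : Fin N, nrm x :=
        Finset.sum_le_sum fun i _ => pnorm_restr_le_nrm hreg hθ0 hn hT p _ x
    _ = (N : ℝ) * nrm x := by rw [Finset.sum_const, Finset.card_univ, Fintype.card_fin, nsmul_eq_mul]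

lemma le_nNorm {θ : ℕ → ℝ} (hreg : RegularSeq θ) (hθ0 : θ 0 = 1)
    {nrm : C00 → ℝ} (hn : IsNorm nrm) (hT : MixedTsirelsonNorm θ nrm) {N p : ℕ} {x : C00}
    (E : Fin N → Finset ℕ) (h1 : ∀ i, IsInterval (E i))
    (h2 : ∀ i j : Fin N, i < j → FinLt (E i) (E j)) (h3 : ∀ i, ∀ a ∈ E i, N ≤ a) :
    ∑ i, pnorm θ nrm p (restr (E i) x) ≤ nNorm θ nrm N p x :=
  le_csSup (bddAbove_nNorm_set hreg hθ0 hn hT N p x) ⟨E, h1, h2, h3, rfl⟩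

lemma nNorm_nonneg {θ : ℕ → ℝ} (hreg : RegularSeq θ) (hθ0 : θ 0 = 1)
    {nrm : C00 → ℝ} (hn : IsNorm nrm) (hT : MixedTsirelsonNorm θ nrm) (N p : ℕ) (x : C00) :
    0 ≤ nNorm θ nrm N p x := by
  have h := le_nNorm hreg hθ0 hn hT (x := x) (p := p) (fun _ : Fin N => (∅ : Finset ℕ))
    (fun i a ha => (Finset.notMem_empty a ha).elim)
    (fun i j _ a ha => (Finset.notMem_empty a ha).elim)
    (fun i a ha => (Finset.notMem_empty a ha).elim)
  refine le_trans (le_of_eq ?_) h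
  rw [Finset.sum_eq_zero]
  intro i _
  rw [restr_empty, pnorm_of_zero hn]

end Aux5
section Aux6

open Finset

lemma isInterval_Icc (a b : ℕ) : IsInterval (Finset.Icc a b) := by
  intro x hx y hy c hxc hcy
  rw [Finset.mem_Icc] at *
  exact ⟨le_trans hx.1 hxc, le_trans hcy hy.2⟩

lemma isInterval_empty : IsInterval (∅ : Finset ℕ) :=
  fun a ha => (Finset.notMem_empty a ha).elim

lemma finset_sInf_mem {s : Finset ℕ} (h : s.Nonempty) : sInf ((s : Finset ℕ) : Set ℕ) ∈ s := by
  have hne : ((s : Finset ℕ) : Set ℕ).Nonempty := by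
    obtain ⟨a, ha⟩ := h; exact ⟨a, by exact_mod_cast ha⟩
  have := Nat.sInf_mem hne
  exact_mod_cast this

lemma finset_sInf_le {s : Finset ℕ} {a : ℕ} (ha : a ∈ s) : sInf ((s : Finset ℕ) : Set ℕ) ≤ a :=
  Nat.sInf_le (by exact_mod_cast ha)

/-- The key per-vector chunking estimate. -/
lemma claim3 {θ : ℕ → ℝ} (hreg : RegularSeq θ) (hθ0 : θ 0 = 1)
    {nrm : C00 → ℝ} (hn : IsNorm nrm) (hT : MixedTsirelsonNorm θ nrm)
    {p : ℕ} (hp : 1 ≤ p) (xi : C00) (Nstar : ℕ)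
    {m : ℕ} (G : Fin m → Finset ℕ) (hadm : AdmissibleIntervals (SchreierFam p) G)
    (hwit : ∃ (l : Fin m) (b : ℕ), b ∈ G l ∧ b ≤ Nstar)
    (hsupp : ∀ j ∈ xi.support, Nstar < j) :
    θ p * ∑ l, nrm (restr (G l) xi) ≤
      (θ p / θ (p - 1)) * nNorm θ nrm Nstar (p - 1) xi := by
  classical
  have hθp := theta_pos hreg hθ0 p
  have hθp1 := theta_pos hreg hθ0 (p - 1)
  -- reduce to the θ (p-1) estimate
  suffices hkey : θ (p - 1) * ∑ l, nrm (restr (G l) xi) ≤ nNorm θ nrm Nstar (p - 1) xi by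
    have heq : θ p * ∑ l, nrm (restr (G l) xi) =
        (θ p / θ (p - 1)) * (θ (p - 1) * ∑ l, nrm (restr (G l) xi)) := by
      field_simp
    rw [heq]
    apply mul_le_mul_of_nonneg_left hkey
    positivity
  by_cases hxi : xi = 0
  · subst hxi
    simp only [restr_zero, nrm_zero hn, Finset.sum_const, smul_zero, mul_zero]
    exact nNorm_nonneg hreg hθ0 hn hT _ _ _
  have hxine := hxi
  -- basic facts about the family
  have hGne : ∀ l, (G l).Nonempty := fun l => (hadm.1 l).1
  have hGint : ∀ l, IsInterval (G l) := fun l => (hadm.1 l).2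
  set sInfG : Fin m → ℕ := fun l => sInf ((G l : Finset ℕ) : Set ℕ) with hsInfG
  have hsInfG_mem : ∀ l, sInfG l ∈ G l := fun l => finset_sInf_mem (hGne l)
  have hsInfG_mono : ∀ l l' : Fin m, l < l' → sInfG l < sInfG l' := by
    intro l l' h
    exact hadm.2.1 l l' h _ (hsInfG_mem l) _ (hsInfG_mem l')
  -- the Schreier decomposition of the set of minima
  have hM := hadm.2.2
  have hp' : p = (p - 1) + 1 := (Nat.succ_pred_eq_of_pos hp).symm
  rw [hp'] at hM
  simp only [SchreierFam] at hM
  obtain ⟨r, Fs, hFsS, hFsord, hFsge, hFeq⟩ := hM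
  have hMdef : ∀ l : Fin m, sInfG l ∈ Finset.univ.biUnion Fs := by
    intro l
    rw [← hFeq]
    exact Finset.mem_image.2 ⟨l, Finset.mem_univ l, rfl⟩
  -- assignment of chunks
  have htex : ∀ l : Fin m, ∃ t : Fin r, sInfG l ∈ Fs t := by
    intro l
    obtain ⟨t, _, ht⟩ := Finset.mem_biUnion.1 (hMdef l)
    exact ⟨t, ht⟩
  set tassign : Fin m → Fin r := fun l => (htex l).choose with htassign
  have htmem : ∀ l, sInfG l ∈ Fs (tassign l) := fun l => (htex l).choose_spec
  have htuniq : ∀ (l : Fin m) (t : Fin r), sInfG l ∈ Fs t → t = tassign l := by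
    intro l t ht
    by_contra hne
    rcases lt_or_gt_of_ne hne with h | h
    · exact lt_irrefl _ (hFsord t (tassign l) h _ ht _ (htmem l))
    · exact lt_irrefl _ (hFsord (tassign l) t h _ (htmem l) _ ht)
  -- r ≤ Nstar
  have hrN : r ≤ Nstar := by
    obtain ⟨l0, b, hbG, hbN⟩ := hwit
    have h1 : sInfG l0 ≤ b := finset_sInf_le hbG
    have h2 : r ≤ sInfG l0 := hFsge (tassign l0) _ (htmem l0)
    omega
  -- chunks
  set C : Fin r → Finset (Fin m) := fun t => Finset.univ.filter (fun l => tassign l = t) with hC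
  have hCmem : ∀ (t : Fin r) (l : Fin m), l ∈ C t ↔ tassign l = t := by
    intro t l; rw [hC]; simp
  -- chunk minima image
  have hCimage : ∀ t : Fin r, (C t).image sInfG = Fs t := by
    intro t
    apply Finset.ext
    intro a
    constructor
    · intro ha
      obtain ⟨l, hl, rfl⟩ := Finset.mem_image.1 ha
      rw [hCmem] at hl
      rw [← hl]
      exact htmem l
    · intro ha
      have haM : a ∈ Finset.univ.biUnion Fs := Finset.mem_biUnion.2 ⟨t, Finset.mem_univ t, ha⟩
      rw [← hFeq] at haM
      obtain ⟨l, _, rfl⟩ := Finset.mem_image.1 haM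
      have := htuniq l t ha
      exact Finset.mem_image.2 ⟨l, (hCmem t l).2 this.symm, rfl⟩
  -- monotonicity of assignment
  have hmaxG_mem : ∀ l, (G l).max' (hGne l) ∈ G l := fun l => Finset.max'_mem _ _
  have htassign_lt : ∀ (l l' : Fin m), tassign l < tassign l' → l < l' := by
    intro l l' h
    have h1 : sInfG l < sInfG l' :=
      hFsord (tassign l) (tassign l') h _ (htmem l) _ (htmem l')
    by_contra hle
    push_neg at hle
    rcases eq_or_lt_of_le hle with rfl | hlt
    · exact lt_irrefl _ h1
    · exact absurd h1 (not_lt.2 (le_of_lt (hsInfG_mono l' l hlt)))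
  -- the hull intervals
  set Ht : Fin r → Finset ℕ := fun t =>
    if h : (C t).Nonempty then
      Finset.Icc (max (sInfG ((C t).min' h)) (minSupp xi))
        (min ((G ((C t).max' h)).max' (hGne _)) (maxSupp xi))
    else ∅ with hHt
  have hHt_int : ∀ t, IsInterval (Ht t) := by
    intro t
    by_cases h : (C t).Nonempty
    · simp only [hHt, dif_pos h]; exact isInterval_Icc _ _
    · simp only [hHt, dif_neg h]; exact isInterval_empty
  -- coverage : support points of xi inside G l (l ∈ C t) belong to Ht t
  have hcover : ∀ (t : Fin r) (l : Fin m), l ∈ C t → ∀ j ∈ G l, xi j ≠ 0 → j ∈ Ht t := by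
    intro t l hl j hjG hjxi
    have hCt : (C t).Nonempty := ⟨l, hl⟩
    simp only [hHt, dif_pos hCt, Finset.mem_Icc]
    have hminle : (C t).min' hCt ≤ l := Finset.min'_le _ _ hl
    have hlemax : l ≤ (C t).max' hCt := Finset.le_max' _ _ hl
    constructor
    · apply max_le
      · -- sInfG (min) ≤ j
        rcases eq_or_lt_of_le hminle with h | h
        · rw [h]; exact finset_sInf_le hjG
        · exact le_trans (le_of_lt (hsInfG_mono _ _ h)) (finset_sInf_le hjG)
      · exact minSupp_le hjxi
    · refine le_min ?_ ?_
      · -- j ≤ max of G (max C t)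
        rcases eq_or_lt_of_le hlemax with h | h
        · rw [← h]; exact Finset.le_max' _ _ hjG
        · have := hadm.2.1 l _ h j hjG _ (hsInfG_mem ((C t).max' hCt))
          exact le_trans (le_of_lt this) (Finset.le_max' _ _ (hsInfG_mem _))
      · exact le_maxSupp hjxi
  -- restr equality on chunks
  have hrestr_eq : ∀ (t : Fin r) (l : Fin m), l ∈ C t →
      restr (G l) (restr (Ht t) xi) = restr (G l) xi := by
    intro t l hl
    rw [restr_restr]
    ext j
    rw [restr_apply, restr_apply]
    by_cases hj1 : j ∈ G l ∩ Ht t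
    · rw [if_pos hj1, if_pos (Finset.mem_inter.1 hj1).1]
    · rw [if_neg hj1]
      by_cases hj2 : j ∈ G l
      · rw [if_pos hj2]
        by_contra hne
        have : xi j ≠ 0 := fun h => hne h.symm
        exact hj1 (Finset.mem_inter.2 ⟨hj2, hcover t l hl j hj2 this⟩)
      · rw [if_neg hj2]
  -- chunk estimate
  have hchunk : ∀ t : Fin r,
      θ (p - 1) * ∑ l ∈ C t, nrm (restr (G l) xi) ≤
        pnorm θ nrm (p - 1) (restr (Ht t) xi) := by
    intro t
    by_cases hCt : (C t).Nonempty
    · rcases Nat.eq_zero_or_pos (p - 1) with hp1 | hp1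
      · -- p = 1 : chunks are singletons
        have hθ01 : θ (p - 1) = 1 := by rw [hp1, hθ0]
        rw [hθ01, one_mul]
        have hcard : (C t).card ≤ 1 := by
          have h1 : ((C t).image sInfG).card = (C t).card := by
            apply Finset.card_image_of_injOn
            intro a ha b hb hab
            by_contra hne
            rcases lt_or_gt_of_ne hne with h | h
            · exact absurd hab (ne_of_lt (hsInfG_mono a b h))
            · exact absurd hab.symm (ne_of_lt (hsInfG_mono b a h))
          have h2 := hFsS t
          rw [hp1] at h2
          simp only [SchreierFam] at h2
          rw [Set.mem_setOf_eq] at h2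
          rw [hCimage t] at h1
          rw [h1] at h2
          exact h2
        obtain ⟨l, hl⟩ := hCt
        have hCeq : C t = {l} := by
          apply Finset.eq_singleton_iff_unique_mem.2
          refine ⟨hl, ?_⟩
          intro l' hl'
          by_contra hne
          have h2 : ({l', l} : Finset (Fin m)) ⊆ C t := by
            intro a ha
            rcases Finset.mem_insert.1 ha with rfl | ha
            · exact hl'
            · rw [Finset.mem_singleton.1 ha]; exact hl
          have := Finset.card_le_card h2
          rw [Finset.card_insert_of_notMem (by simpa using hne), Finset.card_singleton] at this
          omega
        rw [hCeq, Finset.sum_singleton]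
        have hpn : pnorm θ nrm (p-1) (restr (Ht t) xi) = nrm (restr (Ht t) xi) := by
          rw [pnorm, if_pos hp1]
        rw [hpn, ← hrestr_eq t l hl]
        exact nrm_restr_le hreg hθ0 hn hT (restr (Ht t) xi) (G l)
      · -- p ≥ 2 : use the admissible chunk family
        set e := (C t).orderIsoOfFin rfl with he
        have hsum : ∑ s : Fin (C t).card, nrm (restr (G (e s)) (restr (Ht t) xi)) =
            ∑ l ∈ C t, nrm (restr (G l) (restr (Ht t) xi)) := by
          apply Finset.sum_bij (fun (s : Fin (C t).card) _ => (e s : Fin m))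
          · intro s _; exact (e s).2
          · intro s _ s' _ h
            have : e s = e s' := Subtype.ext h
            exact e.injective this
          · intro l hl
            exact ⟨e.symm ⟨l, hl⟩, Finset.mem_univ _, by simp⟩
          · intro s _; rfl
        have hadmC : AdmissibleIntervals (SchreierFam (p - 1))
            (fun s : Fin (C t).card => G (e s)) := by
          refine ⟨fun s => ⟨hGne _, hGint _⟩, ?_, ?_⟩
          · intro s s' h
            apply hadm.2.1
            exact e.lt_iff_lt.2 h
          · have himg : Finset.univ.image
                (fun s : Fin (C t).card => sInf ((G (e s) : Finset ℕ) : Set ℕ)) =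
                (C t).image sInfG := by
              apply Finset.ext
              intro a
              simp only [Finset.mem_image, Finset.mem_univ, true_and]
              constructor
              · rintro ⟨s, rfl⟩
                exact ⟨e s, (e s).2, rfl⟩
              · rintro ⟨l, hl, rfl⟩
                exact ⟨e.symm ⟨l, hl⟩, by simp [hsInfG]⟩
            rw [himg, hCimage t]
            exact hFsS t
        have := pnorm_ge_admissible hreg hθ0 hn (p := p - 1) hp1
          (fun s : Fin (C t).card => G (e s)) hadmC (restr (Ht t) xi)
        rw [hsum] at this
        refine le_trans (le_of_eq ?_) this
        congr 1
        apply Finset.sum_congr rfl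
        intro l hl
        rw [hrestr_eq t l hl]
    · rw [Finset.not_nonempty_iff_eq_empty.1 hCt]
      rw [Finset.sum_empty, mul_zero]
      exact pnorm_nonneg hreg hθ0 hn _ _
  -- fiberwise sum
  have hfiber : ∑ l, nrm (restr (G l) xi) = ∑ t : Fin r, ∑ l ∈ C t, nrm (restr (G l) xi) := by
    rw [hC]
    exact (Finset.sum_fiberwise Finset.univ tassign (fun l => nrm (restr (G l) xi))).symm
  rw [hfiber, Finset.mul_sum]
  -- the Nstar-family
  set EE : Fin Nstar → Finset ℕ := fun s => if h : (s : ℕ) < r then Ht ⟨s, h⟩ else ∅ with hEE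
  have hminSupp_gt : Nstar < minSupp xi := hsupp _ (Finsupp.mem_support_iff.2 (minSupp_mem hxine))
  have hHt_elts : ∀ (t : Fin r) (a : ℕ), a ∈ Ht t → minSupp xi ≤ a := by
    intro t a ha
    by_cases h : (C t).Nonempty
    · simp only [hHt, dif_pos h, Finset.mem_Icc] at ha
      exact le_trans (le_max_right _ _) ha.1
    · simp only [hHt, dif_neg h, Finset.notMem_empty] at ha
  have hHt_ord : ∀ (t t' : Fin r), t < t' → FinLt (Ht t) (Ht t') := by
    intro t t' h a ha b hb
    by_cases h1 : (C t).Nonempty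
    · by_cases h2 : (C t').Nonempty
      · simp only [hHt, dif_pos h1, Finset.mem_Icc] at ha
        simp only [hHt, dif_pos h2, Finset.mem_Icc] at hb
        have hlt : (C t).max' h1 < (C t').min' h2 := by
          apply htassign_lt
          have e1 : tassign ((C t).max' h1) = t := (hCmem t _).1 (Finset.max'_mem _ _)
          have e2 : tassign ((C t').min' h2) = t' := (hCmem t' _).1 (Finset.min'_mem _ _)
          rw [e1, e2]; exact h
        have hFl := hadm.2.1 _ _ hlt
        have : (G ((C t).max' h1)).max' (hGne _) < sInfG ((C t').min' h2) :=
          hFl _ (hmaxG_mem _) _ (hsInfG_mem _)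
        calc a ≤ (G ((C t).max' h1)).max' (hGne _) := le_trans ha.2 (min_le_left _ _)
          _ < sInfG ((C t').min' h2) := this
          _ ≤ max (sInfG ((C t').min' h2)) (minSupp xi) := le_max_left _ _
          _ ≤ b := hb.1
      · simp only [hHt, dif_neg h2, Finset.notMem_empty] at hb
    · simp only [hHt, dif_neg h1, Finset.notMem_empty] at ha
  have hEEsum : ∑ s : Fin Nstar, pnorm θ nrm (p - 1) (restr (EE s) xi) =
      ∑ t : Fin r, pnorm θ nrm (p - 1) (restr (Ht t) xi) := by
    have h1 : ∀ s : Fin Nstar, pnorm θ nrm (p - 1) (restr (EE s) xi) =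
        (fun a : ℕ => if h : a < r then pnorm θ nrm (p - 1) (restr (Ht ⟨a, h⟩) xi) else 0)
          (s : ℕ) := by
      intro s
      by_cases h : (s : ℕ) < r
      · simp only [hEE, dif_pos h]
      · simp only [hEE, dif_neg h, restr_empty, pnorm_of_zero hn]
    have h2 : ∀ t : Fin r, pnorm θ nrm (p - 1) (restr (Ht t) xi) =
        (fun a : ℕ => if h : a < r then pnorm θ nrm (p - 1) (restr (Ht ⟨a, h⟩) xi) else 0)
          (t : ℕ) := by
      intro t
      simp only [dif_pos t.2]
    calc ∑ s : Fin Nstar, pnorm θ nrm (p - 1) (restr (EE s) xi)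
        = ∑ s : Fin Nstar, (fun a : ℕ => if h : a < r then
            pnorm θ nrm (p - 1) (restr (Ht ⟨a, h⟩) xi) else 0) (s : ℕ) :=
          Finset.sum_congr rfl (fun s _ => h1 s)
      _ = ∑ a ∈ Finset.range Nstar, (fun a : ℕ => if h : a < r then
            pnorm θ nrm (p - 1) (restr (Ht ⟨a, h⟩) xi) else 0) a :=
          Fin.sum_univ_eq_sum_range (fun a : ℕ => if h : a < r then
            pnorm θ nrm (p - 1) (restr (Ht ⟨a, h⟩) xi) else 0) Nstar
      _ = ∑ a ∈ Finset.range r, (fun a : ℕ => if h : a < r then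
            pnorm θ nrm (p - 1) (restr (Ht ⟨a, h⟩) xi) else 0) a := by
          rw [Finset.sum_subset (Finset.range_subset_range.2 hrN)]
          intro a _ ha
          rw [Finset.mem_range] at ha
          simp only [dif_neg ha]
      _ = ∑ t : Fin r, (fun a : ℕ => if h : a < r then
            pnorm θ nrm (p - 1) (restr (Ht ⟨a, h⟩) xi) else 0) (t : ℕ) :=
          (Fin.sum_univ_eq_sum_range (fun a : ℕ => if h : a < r then
            pnorm θ nrm (p - 1) (restr (Ht ⟨a, h⟩) xi) else 0) r).symm
      _ = ∑ t : Fin r, pnorm θ nrm (p - 1) (restr (Ht t) xi) :=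
          Finset.sum_congr rfl (fun t _ => (h2 t).symm)
  have hfinal : ∑ t : Fin r, θ (p - 1) * ∑ l ∈ C t, nrm (restr (G l) xi) ≤
      nNorm θ nrm Nstar (p - 1) xi := by
    calc ∑ t : Fin r, θ (p - 1) * ∑ l ∈ C t, nrm (restr (G l) xi)
        ≤ ∑ t : Fin r, pnorm θ nrm (p - 1) (restr (Ht t) xi) :=
          Finset.sum_le_sum (fun t _ => hchunk t)
      _ = ∑ s : Fin Nstar, pnorm θ nrm (p - 1) (restr (EE s) xi) := hEEsum.symm
      _ ≤ nNorm θ nrm Nstar (p - 1) xi := by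
          apply le_nNorm hreg hθ0 hn hT
          · intro s
            by_cases h : (s : ℕ) < r
            · simp only [hEE, dif_pos h]; exact hHt_int _
            · simp only [hEE, dif_neg h]; exact isInterval_empty
          · intro s s' h
            by_cases h1 : (s : ℕ) < r
            · by_cases h2 : (s' : ℕ) < r
              · simp only [hEE, dif_pos h1, dif_pos h2]
                exact hHt_ord _ _ (by exact_mod_cast h)
              · simp only [hEE, dif_neg h2]
                intro a _ b hb
                exact absurd hb (Finset.notMem_empty b)
            · simp only [hEE, dif_neg h1]
              intro a ha
              exact absurd ha (Finset.notMem_empty a)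
          · intro s a ha
            by_cases h : (s : ℕ) < r
            · simp only [hEE, dif_pos h] at ha
              have := hHt_elts _ _ ha
              omega
            · simp only [hEE, dif_neg h, Finset.notMem_empty] at ha
  exact le_trans (le_of_eq (Finset.sum_congr rfl (fun t _ => rfl))) hfinal

end Aux6
section Aux7

open Finset

lemma interval_supp_subset {E : Finset ℕ} (hE : IsInterval E) {v : C00}
    (h1 : minSupp v ∈ E) (h2 : maxSupp v ∈ E) : ∀ a ∈ v.support, a ∈ E := by
  intro a ha
  rw [Finsupp.mem_support_iff] at ha
  exact hE _ h1 _ h2 a (minSupp_le ha) (le_maxSupp ha)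

theorem long_average_nNorm_estimate'
    (θ : ℕ → ℝ) (hreg : RegularSeq θ) (hθ0 : θ 0 = 1)
    (nrm : C00 → ℝ) (hn : IsNorm nrm) (hT : MixedTsirelsonNorm θ nrm)
    (k : ℕ) (x : ℕ → C00)
    (hne : ∀ i < k, x i ≠ 0)
    (hord : ∀ i j : ℕ, i < j → j < k → FinLt (x i).support (x j).support)
    (hk0 : 0 < k) (hfirst : k ≤ minSupp (x 0))
    (hnorm1 : ∀ i < k, nrm (x i) ≤ 1)
    (ε : ℝ) (hε0 : 0 < ε) (hε1 : ε < 1) (N : ℕ)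
    (F : Finset ℕ) (hFI : IsInterval F)
    (hFsub : (F : Set ℕ) ⊆ ranSet ((k : ℝ)⁻¹ • ∑ i ∈ Finset.range k, x i))
    (hFns : ∀ i < k, ((F : Set ℕ) ∩ ranSet (x i) = (∅ : Set ℕ)) ∨ ranSet (x i) ⊆ (F : Set ℕ))
    (hbig : 6 * (N : ℝ) / (θ 1 * ε) < (k : ℝ))
    (p : ℕ) (hp : 1 ≤ p) :
    nNorm θ nrm N p (restr F ((k : ℝ)⁻¹ • ∑ i ∈ Finset.range k, x i)) ≤
      (θ p / θ (p - 1)) *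
        sSup {r : ℝ | ∃ i < k, ranSet (x i) ⊆ (F : Set ℕ) ∧
          r = nNorm θ nrm (if i = 0 then 1 else maxSupp (x (i - 1))) (p - 1) (x i)} +
      ε := by
  classical
  have hθp := theta_pos hreg hθ0 p
  have hθp1 := theta_pos hreg hθ0 (p - 1)
  have hkR : (0 : ℝ) < (k : ℝ) := by exact_mod_cast hk0
  set c : ℝ := θ p / θ (p - 1) with hc
  have hcnn : 0 ≤ c := by positivity
  set xb : C00 := (k : ℝ)⁻¹ • ∑ i ∈ Finset.range k, x i with hxb
  set y : C00 := restr F xb with hy0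
  set Mset : Set ℝ := {r : ℝ | ∃ i < k, ranSet (x i) ⊆ (F : Set ℕ) ∧
      r = nNorm θ nrm (if i = 0 then 1 else maxSupp (x (i - 1))) (p - 1) (x i)} with hMset
  set M : ℝ := sSup Mset with hM
  have hMnn : 0 ≤ M := by
    apply Real.sSup_nonneg
    rintro r ⟨i, hik, hsub, rfl⟩
    exact nNorm_nonneg hreg hθ0 hn hT _ _ _
  have hMbdd : BddAbove Mset := by
    have hfin : Mset ⊆ ↑((Finset.range k).image (fun i =>
        nNorm θ nrm (if i = 0 then 1 else maxSupp (x (i - 1))) (p - 1) (x i))) := by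
      rintro r ⟨i, hik, _, rfl⟩
      simp only [Finset.coe_image, Set.mem_image, Finset.mem_coe, Finset.mem_range]
      exact ⟨i, hik, rfl⟩
    exact BddAbove.mono hfin (((Finset.range k).image _).finite_toSet.bddAbove)
  -- the set A of indices captured by F
  set A : Finset ℕ := (Finset.range k).filter
      (fun i => minSupp (x i) ∈ F ∧ maxSupp (x i) ∈ F) with hA
  have hAk : ∀ i ∈ A, i < k := by
    intro i hi; rw [hA, Finset.mem_filter, Finset.mem_range] at hi; exact hi.1
  have hAiff : ∀ i < k, (i ∈ A ↔ ranSet (x i) ⊆ (F : Set ℕ)) := by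
    intro i hik
    rw [hA, Finset.mem_filter, Finset.mem_range]
    constructor
    · rintro ⟨_, h1, h2⟩ a ha
      rw [ranSet, Set.mem_Icc] at ha
      exact hFI _ h1 _ h2 a ha.1 ha.2
    · intro h
      refine ⟨hik, ?_, ?_⟩
      · exact h ⟨le_rfl, minSupp_le_maxSupp (hne i hik)⟩
      · exact h ⟨minSupp_le_maxSupp (hne i hik), le_rfl⟩
  have hrestrF : ∀ i < k, restr F (x i) = if i ∈ A then x i else 0 := by
    intro i hik
    by_cases hi : i ∈ A
    · rw [if_pos hi]
      apply restr_eq_self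
      intro a ha
      have hx := (hAiff i hik).1 hi
      exact hx (supp_subset_ranSet (Finsupp.mem_support_iff.1 ha))
    · rw [if_neg hi]
      rcases hFns i hik with hcase | hcase
      · apply restr_eq_zero
        intro a ha haF
        have : a ∈ (F : Set ℕ) ∩ ranSet (x i) :=
          ⟨haF, supp_subset_ranSet (Finsupp.mem_support_iff.1 ha)⟩
        rw [hcase] at this
        exact this
      · exact absurd ((hAiff i hik).2 hcase) hi
  -- the master identity
  have hyid : ∀ Gs : Finset ℕ, restr Gs y = (k : ℝ)⁻¹ • ∑ i ∈ A, restr Gs (x i) := by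
    intro Gs
    rw [hy0, restr_restr, hxb, restr_smul, restr_sum]
    congr 1
    have h1 : ∀ i ∈ Finset.range k, restr (Gs ∩ F) (x i) =
        if i ∈ A then restr Gs (x i) else 0 := by
      intro i hi
      rw [Finset.mem_range] at hi
      rw [← restr_restr, hrestrF i hi]
      by_cases h : i ∈ A
      · rw [if_pos h, if_pos h]
      · rw [if_neg h, if_neg h, restr_zero]
    rw [Finset.sum_congr rfl h1, Finset.sum_ite_mem]
    have : Finset.range k ∩ A = A := by
      apply Finset.inter_eq_right.2
      intro i hi; exact Finset.mem_range.2 (hAk i hi)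
    rw [this]
  -- main: bound each element of the nNorm sup
  apply Real.sSup_le
  swap
  · have : 0 ≤ c * M := mul_nonneg hcnn hMnn
    linarith
  rintro rr ⟨E, hEint, hEord, hEge, rfl⟩
  -- the captured sets per window
  set Aj : Fin N → Finset ℕ := fun j => A.filter
      (fun i => minSupp (x i) ∈ E j ∧ maxSupp (x i) ∈ E j) with hAj
  -- the per-window per-family bound
  have hfam : ∀ (j : Fin N) (m : ℕ) (G : Fin m → Finset ℕ),
      AdmissibleIntervals (SchreierFam p) G →
      θ p * ∑ l, nrm (restr (G l) (restr (E j) y)) ≤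
        ((3 : ℝ) + ((Aj j).card : ℝ) * (c * M)) / (k : ℝ) := by
    intro j m G hadmG
    set u : ℕ → C00 := fun i => restr (E j) (x i) with hu
    have hwl : ∀ l, restr (G l) (restr (E j) y) =
        (k : ℝ)⁻¹ • ∑ i ∈ A, restr (G l) (u i) := by
      intro l
      rw [restr_restr, hyid (G l ∩ E j)]
      congr 1
      apply Finset.sum_congr rfl
      intro i _
      rw [hu, ← restr_restr]
    set Sp : ℕ → ℝ := fun i => ∑ l, nrm (restr (G l) (u i)) with hSp
    have hs_le : ∑ l, nrm (restr (G l) (restr (E j) y)) ≤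
        (k : ℝ)⁻¹ * ∑ i ∈ A, Sp i := by
      have h1 : ∀ l : Fin m, nrm (restr (G l) (restr (E j) y)) ≤
          (k : ℝ)⁻¹ * ∑ i ∈ A, nrm (restr (G l) (u i)) := by
        intro l
        rw [hwl l, hn.2.1, abs_of_nonneg (inv_nonneg.2 (le_of_lt hkR))]
        exact mul_le_mul_of_nonneg_left (nrm_sum_le hn A _)
          (inv_nonneg.2 (le_of_lt hkR))
      calc ∑ l, nrm (restr (G l) (restr (E j) y))
          ≤ ∑ l, (k : ℝ)⁻¹ * ∑ i ∈ A, nrm (restr (G l) (u i)) :=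
            Finset.sum_le_sum (fun l _ => h1 l)
        _ = (k : ℝ)⁻¹ * ∑ l, ∑ i ∈ A, nrm (restr (G l) (u i)) := by
            rw [Finset.mul_sum]
        _ = (k : ℝ)⁻¹ * ∑ i ∈ A, Sp i := by rw [Finset.sum_comm]
    have hbound1 : ∀ i ∈ A, θ p * Sp i ≤ 1 := by
      intro i hi
      have hik := hAk i hi
      calc θ p * Sp i ≤ nrm (u i) :=
            admissible_le_nrm hreg hθ0 hn hT hp G (admInt_to_admSets hadmG) (u i)
        _ ≤ nrm (x i) := nrm_restr_le hreg hθ0 hn hT (x i) (E j)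
        _ ≤ 1 := hnorm1 i hik
    have hSpnn : ∀ i, 0 ≤ Sp i := by
      intro i
      exact Finset.sum_nonneg fun l _ => nrm_nonneg hn _
    set tch : ℕ → Prop := fun i => ∃ l : Fin m, restr (G l) (u i) ≠ 0 with htch
    have hzeroS : ∀ i, ¬ tch i → Sp i = 0 := by
      intro i hi
      rw [hSp]
      apply Finset.sum_eq_zero
      intro l _
      simp only [htch, not_exists, ne_eq, not_not] at hi
      rw [hi l, nrm_zero hn]
    -- witness extraction for touched indices
    have hwitness : ∀ i, tch i → ∃ (l : Fin m) (b : ℕ), b ∈ G l ∧ b ∈ E j ∧ x i b ≠ 0 := by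
      intro i hi
      obtain ⟨l, hl⟩ := hi
      obtain ⟨b, hb⟩ := Finsupp.ne_iff.1 hl
      rw [restr_apply] at hb
      simp only [Finsupp.coe_zero, Pi.zero_apply] at hb
      by_cases h1 : b ∈ G l
      · rw [if_pos h1] at hb
        rw [hu, restr_apply] at hb
        by_cases h2 : b ∈ E j
        · rw [if_pos h2] at hb
          exact ⟨l, b, h1, h2, hb⟩
        · rw [if_neg h2] at hb; exact absurd rfl hb
      · rw [if_neg h1] at hb; exact absurd rfl hb
    -- bound 2 : the good case
    have hbound2 : ∀ i ∈ A, (minSupp (x i) ∈ E j ∧ maxSupp (x i) ∈ E j) →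
        (∃ i' ∈ A, i' < i ∧ tch i') → θ p * Sp i ≤ c * M := by
      intro i hi hQ hex
      have hik := hAk i hi
      obtain ⟨i', hi'A, hi'lt, hi'tch⟩ := hex
      obtain ⟨l', b, hbG, hbE, hbx⟩ := hwitness i' hi'tch
      have hi'k := hAk i' hi'A
      have hipos : 0 < i := Nat.pos_of_ne_zero (by omega)
      have hi1k : i - 1 < k := by omega
      set Nstar : ℕ := maxSupp (x (i - 1)) with hNstar
      have hbN : b ≤ Nstar := by
        have h1 : b ≤ maxSupp (x i') := le_maxSupp hbx
        rcases eq_or_lt_of_le (Nat.le_sub_one_of_lt hi'lt) with h | h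
        · rw [hNstar, ← h]; exact h1
        · have h2 : maxSupp (x i') < maxSupp (x (i - 1)) := by
            apply hord i' (i - 1) h hi1k
            · exact Finsupp.mem_support_iff.2 (maxSupp_mem (hne i' hi'k))
            · exact Finsupp.mem_support_iff.2 (maxSupp_mem (hne (i - 1) hi1k))
          omega
      have hsuppi : ∀ a ∈ (x i).support, Nstar < a := by
        intro a ha
        apply hord (i - 1) i (by omega) hik
        · exact Finsupp.mem_support_iff.2 (maxSupp_mem (hne (i - 1) hi1k))
        · exact ha
      have hueq : u i = x i := by
        rw [hu]
        apply restr_eq_self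
        exact interval_supp_subset (hEint j) hQ.1 hQ.2
      have hclaim := claim3 hreg hθ0 hn hT hp (x i) Nstar G hadmG
        ⟨l', b, hbG, hbN⟩ hsuppi
      have hSpeq : Sp i = ∑ l, nrm (restr (G l) (x i)) := by
        rw [hSp]
        apply Finset.sum_congr rfl
        intro l _
        rw [hueq]
      rw [hSpeq]
      refine le_trans hclaim ?_
      apply mul_le_mul_of_nonneg_left _ hcnn
      apply le_csSup hMbdd
      refine ⟨i, hik, (hAiff i hik).1 hi, ?_⟩
      rw [if_neg (by omega : ¬ i = 0)]
    -- counting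
    set T : Finset ℕ := A.filter tch with hTdef
    set P : ℕ → Prop := fun i => (minSupp (x i) ∈ E j ∧ maxSupp (x i) ∈ E j) ∧
        ∃ i' ∈ A, i' < i ∧ tch i' with hP
    have hsum0 : ∑ i ∈ A, θ p * Sp i = ∑ i ∈ T, θ p * Sp i := by
      rw [eq_comm]
      apply Finset.sum_subset (Finset.filter_subset _ _)
      intro i hi hit
      have : ¬ tch i := by
        intro h
        exact hit (Finset.mem_filter.2 ⟨hi, h⟩)
      rw [hzeroS i this, mul_zero]
    have hsplit : ∑ i ∈ T, θ p * Sp i =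
        ∑ i ∈ T.filter P, θ p * Sp i + ∑ i ∈ T.filter (fun i => ¬ P i), θ p * Sp i :=
      (Finset.sum_filter_add_sum_filter_not T P _).symm
    have hGood : ∑ i ∈ T.filter P, θ p * Sp i ≤ ((Aj j).card : ℝ) * (c * M) := by
      have hsub : T.filter P ⊆ Aj j := by
        intro i hi
        rw [Finset.mem_filter] at hi
        rw [hAj, Finset.mem_filter]
        exact ⟨(Finset.mem_filter.1 hi.1).1, hi.2.1⟩
      calc ∑ i ∈ T.filter P, θ p * Sp i ≤ ∑ _i ∈ T.filter P, c * M := by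
            apply Finset.sum_le_sum
            intro i hi
            rw [Finset.mem_filter] at hi
            exact hbound2 i (Finset.mem_filter.1 hi.1).1 hi.2.1 hi.2.2
        _ = ((T.filter P).card : ℝ) * (c * M) := by
            rw [Finset.sum_const, nsmul_eq_mul]
        _ ≤ ((Aj j).card : ℝ) * (c * M) := by
            apply mul_le_mul_of_nonneg_right _ (mul_nonneg hcnn hMnn)
            exact_mod_cast Finset.card_le_card hsub
    have hBadCard : (T.filter (fun i => ¬ P i)).card ≤ 3 := by
      set c1 : ℕ := if h : T.Nonempty then T.min' h else 0 with hc1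
      set R2 : ℕ → Prop := fun i => (∀ e ∈ E j, minSupp (x i) < e) ∧
          (∃ d ∈ E j, x i d ≠ 0) with hR2
      set R3 : ℕ → Prop := fun i => (∀ e ∈ E j, e < maxSupp (x i)) ∧
          (∃ d ∈ E j, x i d ≠ 0) with hR3
      set c2 : ℕ := if h : ∃ i'', i'' < k ∧ R2 i'' then h.choose else 0 with hc2
      set c3 : ℕ := if h : ∃ i'', i'' < k ∧ R3 i'' then h.choose else 0 with hc3
      have huniq2 : ∀ i1 i2, i1 < k → i2 < k → R2 i1 → R2 i2 → i1 = i2 := by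
        intro i1 i2 h1k h2k hr1 hr2
        by_contra hne12
        have hmm : ∀ a b : ℕ, a < b → b < k → R2 a → R2 b → False := by
          intro a b hab hbk hra hrb
          obtain ⟨d, hdE, hdx⟩ := hra.2
          have h1 : d ≤ maxSupp (x a) := le_maxSupp hdx
          have h2 : maxSupp (x a) < minSupp (x b) := by
            apply hord a b hab hbk
            · exact Finsupp.mem_support_iff.2 (maxSupp_mem (hne a (lt_trans hab hbk)))
            · exact Finsupp.mem_support_iff.2 (minSupp_mem (hne b hbk))
          have h3 := hrb.1 d hdE
          omega
        rcases lt_or_gt_of_ne hne12 with h | h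
        · exact hmm i1 i2 h h2k hr1 hr2
        · exact hmm i2 i1 h h1k hr2 hr1
      have huniq3 : ∀ i1 i2, i1 < k → i2 < k → R3 i1 → R3 i2 → i1 = i2 := by
        intro i1 i2 h1k h2k hr1 hr2
        by_contra hne12
        have hmm : ∀ a b : ℕ, a < b → b < k → R3 a → R3 b → False := by
          intro a b hab hbk hra hrb
          obtain ⟨d, hdE, hdx⟩ := hrb.2
          have h1 : minSupp (x b) ≤ d := minSupp_le hdx
          have h2 : maxSupp (x a) < minSupp (x b) := by
            apply hord a b hab hbk
            · exact Finsupp.mem_support_iff.2 (maxSupp_mem (hne a (lt_trans hab hbk)))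
            · exact Finsupp.mem_support_iff.2 (minSupp_mem (hne b hbk))
          have h3 := hra.1 d hdE
          omega
        rcases lt_or_gt_of_ne hne12 with h | h
        · exact hmm i1 i2 h h2k hr1 hr2
        · exact hmm i2 i1 h h1k hr2 hr1
      have hsub : T.filter (fun i => ¬ P i) ⊆ {c1, c2, c3} := by
        intro i hi
        rw [Finset.mem_filter] at hi
        obtain ⟨hiT, hiP⟩ := hi
        have hiA : i ∈ A := (Finset.mem_filter.1 hiT).1
        have hitch : tch i := (Finset.mem_filter.1 hiT).2
        have hik := hAk i hiA
        obtain ⟨l, b, hbG, hbE, hbx⟩ := hwitness i hitch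
        by_cases hQ : minSupp (x i) ∈ E j ∧ maxSupp (x i) ∈ E j
        · -- no smaller touched : i is the least element of T
          have hnex : ¬ ∃ i' ∈ A, i' < i ∧ tch i' := by
            intro h
            exact hiP ⟨hQ, h⟩
          have hTne : T.Nonempty := ⟨i, hiT⟩
          have : T.min' hTne = i := by
            apply le_antisymm (Finset.min'_le _ _ hiT)
            by_contra hlt
            push_neg at hlt
            have hmem := Finset.min'_mem T hTne
            have h1 := Finset.mem_filter.1 hmem
            exact hnex ⟨T.min' hTne, h1.1, hlt, h1.2⟩
          have : c1 = i := by rw [hc1, dif_pos hTne, this]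
          rw [Finset.mem_insert]
          exact Or.inl this.symm
        · by_cases hmin : minSupp (x i) ∈ E j
          · -- maxSupp not in E j : R3
            have hmax : maxSupp (x i) ∉ E j := fun h => hQ ⟨hmin, h⟩
            have hR3i : R3 i := by
              constructor
              · intro e he
                by_contra hle
                push_neg at hle
                exact hmax (hEint j b hbE e he (maxSupp (x i)) (le_maxSupp hbx) hle)
              · exact ⟨b, hbE, hbx⟩
            have hex3 : ∃ i'', i'' < k ∧ R3 i'' := ⟨i, hik, hR3i⟩
            have : c3 = i := by
              rw [hc3, dif_pos hex3]
              exact huniq3 _ _ hex3.choose_spec.1 hik hex3.choose_spec.2 hR3i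
            rw [Finset.mem_insert, Finset.mem_insert, Finset.mem_singleton]
            exact Or.inr (Or.inr this.symm)
          · -- minSupp not in E j : R2
            have hR2i : R2 i := by
              constructor
              · intro e he
                by_contra hle
                push_neg at hle
                exact hmin (hEint j e he b hbE (minSupp (x i)) hle (minSupp_le hbx))
              · exact ⟨b, hbE, hbx⟩
            have hex2 : ∃ i'', i'' < k ∧ R2 i'' := ⟨i, hik, hR2i⟩
            have : c2 = i := by
              rw [hc2, dif_pos hex2]
              exact huniq2 _ _ hex2.choose_spec.1 hik hex2.choose_spec.2 hR2i
            rw [Finset.mem_insert, Finset.mem_insert]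
            exact Or.inr (Or.inl this.symm)
      calc (T.filter (fun i => ¬ P i)).card ≤ ({c1, c2, c3} : Finset ℕ).card :=
            Finset.card_le_card hsub
        _ ≤ ({c2, c3} : Finset ℕ).card + 1 := Finset.card_insert_le _ _
        _ ≤ (({c3} : Finset ℕ).card + 1) + 1 := by
            have := Finset.card_insert_le c2 ({c3} : Finset ℕ)
            omega
        _ ≤ 3 := by rw [Finset.card_singleton]
    have hBad : ∑ i ∈ T.filter (fun i => ¬ P i), θ p * Sp i ≤ 3 := by
      calc ∑ i ∈ T.filter (fun i => ¬ P i), θ p * Sp i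
          ≤ ∑ _i ∈ T.filter (fun i => ¬ P i), (1 : ℝ) := by
            apply Finset.sum_le_sum
            intro i hi
            have hiA : i ∈ A := (Finset.mem_filter.1 (Finset.mem_filter.1 hi).1).1
            exact hbound1 i hiA
        _ = ((T.filter (fun i => ¬ P i)).card : ℝ) := by
            rw [Finset.sum_const, nsmul_eq_mul, mul_one]
        _ ≤ 3 := by exact_mod_cast hBadCard
    have htotal : ∑ i ∈ A, θ p * Sp i ≤ 3 + ((Aj j).card : ℝ) * (c * M) := by
      rw [hsum0, hsplit]
      linarith [hGood, hBad]
    -- put it together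
    calc θ p * ∑ l, nrm (restr (G l) (restr (E j) y))
        ≤ θ p * ((k : ℝ)⁻¹ * ∑ i ∈ A, Sp i) :=
          mul_le_mul_of_nonneg_left hs_le (le_of_lt hθp)
      _ = (k : ℝ)⁻¹ * ∑ i ∈ A, θ p * Sp i := by
          rw [← mul_assoc, mul_comm (θ p) ((k:ℝ)⁻¹), mul_assoc, Finset.mul_sum]
      _ ≤ (k : ℝ)⁻¹ * (3 + ((Aj j).card : ℝ) * (c * M)) := by
          apply mul_le_mul_of_nonneg_left htotal (inv_nonneg.2 (le_of_lt hkR))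
      _ = ((3 : ℝ) + ((Aj j).card : ℝ) * (c * M)) / (k : ℝ) := by
          rw [div_eq_inv_mul]
  -- per-window bound
  have hperj : ∀ j : Fin N, pnorm θ nrm p (restr (E j) y) ≤
      ((3 : ℝ) + ((Aj j).card : ℝ) * (c * M)) / (k : ℝ) := by
    intro j
    set β : ℝ := ((3 : ℝ) + ((Aj j).card : ℝ) * (c * M)) / (k : ℝ) with hβ
    have hβnn : 0 ≤ β := by
      rw [hβ]
      apply div_nonneg _ (le_of_lt hkR)
      have : (0:ℝ) ≤ ((Aj j).card : ℝ) * (c * M) :=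
        mul_nonneg (Nat.cast_nonneg _) (mul_nonneg hcnn hMnn)
      linarith
    rw [pnorm, if_neg (by omega : ¬ p = 0)]
    have hsup : sSup {r : ℝ | ∃ (m : ℕ) (G : Fin m → Finset ℕ),
        AdmissibleIntervals (SchreierFam p) G ∧
        r = ∑ l, nrm (restr (G l) (restr (E j) y))} ≤ β / θ p := by
      apply Real.sSup_le
      · rintro r ⟨m, G, hadmG, rfl⟩
        rw [le_div_iff₀ hθp, mul_comm]
        exact hfam j m G hadmG
      · exact div_nonneg hβnn (le_of_lt hθp)
    calc θ p * _ ≤ θ p * (β / θ p) := mul_le_mul_of_nonneg_left hsup (le_of_lt hθp)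
      _ = β := by field_simp
  -- disjointness and final summation
  have hAjdisj : ∀ j j' : Fin N, j ≠ j' → Disjoint (Aj j) (Aj j') := by
    intro j j' hjj'
    rw [Finset.disjoint_left]
    intro i hij hij'
    rw [hAj, Finset.mem_filter] at hij hij'
    rcases lt_or_gt_of_ne hjj' with h | h
    · exact lt_irrefl _ (hEord j j' h _ hij.2.1 _ hij'.2.1)
    · exact lt_irrefl _ (hEord j' j h _ hij'.2.1 _ hij.2.1)
  have hsumAj : ∑ j : Fin N, (Aj j).card ≤ k := by
    have h1 : ∑ j : Fin N, (Aj j).card = (Finset.univ.biUnion Aj).card :=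
      (Finset.card_biUnion (fun j _ j' _ h => hAjdisj j j' h)).symm
    have h2 : Finset.univ.biUnion Aj ⊆ A := by
      intro i hi
      obtain ⟨j, _, hj⟩ := Finset.mem_biUnion.1 hi
      rw [hAj, Finset.mem_filter] at hj
      exact hj.1
    have h3 : A.card ≤ k := by
      rw [hA]
      calc A.card ≤ (Finset.range k).card := Finset.card_le_card (Finset.filter_subset _ _)
        _ = k := Finset.card_range k
    calc ∑ j : Fin N, (Aj j).card = (Finset.univ.biUnion Aj).card := h1
      _ ≤ A.card := Finset.card_le_card h2
      _ ≤ k := h3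
  have h3Nk : 3 * (N : ℝ) / (k : ℝ) < ε := by
    have hθ1pos := (hreg.1 1 le_rfl).1
    have h6 : 6 * (N : ℝ) < (k : ℝ) * (θ 1 * ε) := by
      rw [div_lt_iff₀ (mul_pos hθ1pos hε0)] at hbig
      exact hbig
    have hθ1 : θ 1 ≤ 1 := le_of_lt (hreg.1 1 le_rfl).2
    have h7 : (k : ℝ) * (θ 1 * ε) ≤ (k : ℝ) * ε := by
      nlinarith [mul_pos hkR hε0]
    rw [div_lt_iff₀ hkR]
    have hN0 : (0:ℝ) ≤ (N:ℝ) := Nat.cast_nonneg N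
    nlinarith
  have haj : (∑ j : Fin N, ((Aj j).card : ℝ)) ≤ (k : ℝ) := by
    exact_mod_cast hsumAj
  calc ∑ j : Fin N, pnorm θ nrm p (restr (E j) y)
      ≤ ∑ j : Fin N, ((3 : ℝ) + ((Aj j).card : ℝ) * (c * M)) / (k : ℝ) :=
        Finset.sum_le_sum (fun j _ => hperj j)
    _ = (3 * (N : ℝ) + (∑ j : Fin N, ((Aj j).card : ℝ)) * (c * M)) / (k : ℝ) := by
        rw [← Finset.sum_div]
        congr 1
        rw [Finset.sum_add_distrib, Finset.sum_const, Finset.card_univ, Fintype.card_fin,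
          nsmul_eq_mul, ← Finset.sum_mul]
        push_cast
        ring
    _ ≤ c * M + ε := by
        have h3N : 3 * (N : ℝ) < ε * (k : ℝ) := by
          rw [div_lt_iff₀ hkR] at h3Nk
          linarith
        rw [div_le_iff₀ hkR]
        nlinarith [mul_nonneg hcnn hMnn, haj]

end Aux7
/-- Lemma 4.10 (1): estimate for `‖Fx‖_{N,p}` for a long average
`x = (1/k)(x_1 + ⋯ + x_k)` and an interval `F ⊆ ran(x)` not splitting the `x_i`'s. -/
theorem long_average_nNorm_estimate
    (θ : ℕ → ℝ) (hreg : RegularSeq θ) (hθ0 : θ 0 = 1)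
    (nrm : C00 → ℝ) (hn : IsNorm nrm) (hT : MixedTsirelsonNorm θ nrm)
    (k : ℕ) (x : ℕ → C00)
    (hne : ∀ i < k, x i ≠ 0)
    (hord : ∀ i j : ℕ, i < j → j < k → FinLt (x i).support (x j).support)
    (hk0 : 0 < k) (hfirst : k ≤ minSupp (x 0))
    (hnorm1 : ∀ i < k, nrm (x i) ≤ 1)
    (ε : ℝ) (hε0 : 0 < ε) (hε1 : ε < 1) (N : ℕ)
    (F : Finset ℕ) (hFI : IsInterval F)
    (hFsub : (F : Set ℕ) ⊆ ranSet ((k : ℝ)⁻¹ • ∑ i ∈ Finset.range k, x i))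
    (hFns : ∀ i < k, ((F : Set ℕ) ∩ ranSet (x i) = (∅ : Set ℕ)) ∨ ranSet (x i) ⊆ (F : Set ℕ))
    (hbig : 6 * (N : ℝ) / (θ 1 * ε) < (k : ℝ))
    (p : ℕ) (hp : 1 ≤ p) :
    nNorm θ nrm N p (restr F ((k : ℝ)⁻¹ • ∑ i ∈ Finset.range k, x i)) ≤
      (θ p / θ (p - 1)) *
        sSup {r : ℝ | ∃ i < k, ranSet (x i) ⊆ (F : Set ℕ) ∧
          r = nNorm θ nrm (if i = 0 then 1 else maxSupp (x (i - 1))) (p - 1) (x i)} +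
      ε := by
  exact long_average_nNorm_estimate' θ hreg hθ0 nrm hn hT k x hne hord hk0 hfirst
    hnorm1 ε hε0 hε1 N F hFI hFsub hFns hbig p hp

end
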